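/- Let x_u = (x₁ᵤ, x₂ᵤ, x₃ᵤ), x_v = (x₁ᵥ, x₂ᵥ, x₃ᵥ) ∈ ℝ³ satisfy the isothermal conditions x_u · x_u = λ = x_v · x_v, x_u · x_v = 0, λ > 0, let n = (n₁, n₂, n₃) = λ⁻¹(x_u × x_v), and let h₁₁, h₁₂, h₂₂ be real numbers. Let D be the 4×4 matrix with rows (n₁, n₂, 0, 0), (0, 0, n₁, n₂), (x₁ᵤ, x₂ᵤ, x₁ᵥ, x₂ᵥ), (h₁₂x₁ᵤ + h₂₂x₁ᵥ, h₁₂x₂ᵤ + h₂₂x₂ᵥ, −(h₁₁x₁ᵤ + h₁₂x₁ᵥ), −(h₁₁x₂ᵤ + h₁₂x₂ᵥ)). Then det D = h₁₁ x₃ᵥ² − 2 h₁₂ x₃ᵤ x₃ᵥ + h₂₂ x₃ᵤ². -/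

import Mathlib

open Matrix

theorem darboux_system_determinant (lam : ℝ) (xu xv : Fin 3 → ℝ)
    (hlam : 0 < lam)
    (h1 : xu ⬝ᵥ xu = lam) (h2 : xv ⬝ᵥ xv = lam) (h3 : xu ⬝ᵥ xv = 0)
    (n : Fin 3 → ℝ) (hn : n = lam⁻¹ • crossProduct xu xv)
    (h11 h12 h22 : ℝ)
    (D : Matrix (Fin 4) (Fin 4) ℝ)
    (hD : D = !![n 0, n 1, 0, 0;
                 0, 0, n 0, n 1;
                 xu 0, xu 1, xv 0, xv 1;
                 h12 * xu 0 + h22 * xv 0, h12 * xu 1 + h22 * xv 1,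
                   -(h11 * xu 0 + h12 * xv 0), -(h11 * xu 1 + h12 * xv 1)]) :
    D.det = h11 * (xv 2) ^ 2 - 2 * h12 * (xu 2) * (xv 2) + h22 * (xu 2) ^ 2 := by
  have hl : lam ≠ 0 := ne_of_gt hlam
  simp only [dotProduct, Fin.sum_univ_three] at h1 h2 h3
  have hn0 : n 0 = lam⁻¹ * (xu 1 * xv 2 - xu 2 * xv 1) := by
    rw [hn]; simp [crossProduct]
  have hn1 : n 1 = lam⁻¹ * (xu 2 * xv 0 - xu 0 * xv 2) := by
    rw [hn]; simp [crossProduct]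
  -- key identities: xv = n × xu, xu = xv × n (third components)
  have B2 : n 0 * xu 1 - n 1 * xu 0 = xv 2 := by
    rw [hn0, hn1]
    field_simp
    linear_combination xv 2 * h1 - xu 2 * h3
  have A2 : xv 0 * n 1 - xv 1 * n 0 = xu 2 := by
    rw [hn0, hn1]
    field_simp
    linear_combination xu 2 * h2 - xv 2 * h3
  subst hD
  simp only [Matrix.det_succ_row_zero, Fin.sum_univ_succ, Matrix.det_fin_three,
    Matrix.submatrix_apply, Fin.succ_zero_eq_one, Fin.succ_one_eq_two,
    Matrix.cons_val', Matrix.cons_val_zero, Matrix.cons_val_one, Matrix.head_cons,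
    Matrix.empty_val', Matrix.cons_val_fin_one, Matrix.head_fin_const,
    Fin.succAbove, Fin.val_zero, Fin.val_succ, Matrix.cons_val_succ,
    Fin.sum_univ_zero, Matrix.cons_val_two, Matrix.tail_cons]
  norm_num [Fin.lt_def, Fin.succ]
  simp only [Matrix.cons_val]
  linear_combination (h11 * ((n 0 * xu 1 - n 1 * xu 0) + xv 2) - 2 * h12 * xu 2) * B2
    + (h22 * ((xv 0 * n 1 - xv 1 * n 0) + xu 2) - 2 * h12 * (n 0 * xu 1 - n 1 * xu 0)) * A2
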